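/- arXiv:2212.00084 — 4 statements merged into one kernel-verified Lean document; each statement's English description precedes it below -/
import Mathlib

section
/- (Performance difference lemma.) For any pair of stable policies K' and K, J(K') − J(K) = 2Tr(Σ_{K'}(K'−K)ᵀE_K) + Tr(Σ_{K'}(K'−K)ᵀ(R + BᵀP_KB)(K'−K)). -/
open Matrix Finset

noncomputable def specRad {d : ℕ} (M : Matrix (Fin d) (Fin d) ℝ) : ℝ :=
  sSup {r : ℝ | ∃ z ∈ spectrum ℂ (M.map Complex.ofReal), r = ‖z‖}

noncomputable def sNorm {m n : Type*} [Fintype m] [Fintype n] [DecidableEq n]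
    (M : Matrix m n ℝ) : ℝ :=
  ‖LinearMap.toContinuousLinearMap (Matrix.toEuclideanLin M)‖

noncomputable def frobNorm {m n : Type*} [Fintype m] [Fintype n] (M : Matrix m n ℝ) : ℝ :=
  Real.sqrt (∑ i, ∑ j, (M i j) ^ 2)

noncomputable def minEig {m : Type*} [Fintype m] (M : Matrix m m ℝ) : ℝ :=
  sInf {r : ℝ | ∃ v : m → ℝ, v ≠ 0 ∧ M.mulVec v = r • v}

/-- Performance difference lemma: for stable policies `K'`, `K`,
`J(K') − J(K) = 2Tr(Σ_{K'}(K'−K)ᵀE_K) + Tr(Σ_{K'}(K'−K)ᵀ(R + BᵀP_KB)(K'−K))`. -/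
theorem stmt_2 {n k : ℕ} (hn : 0 < n) (hk : 0 < k)
    (A : Matrix (Fin n) (Fin n) ℝ) (B : Matrix (Fin n) (Fin k) ℝ)
    (Q Ψ : Matrix (Fin n) (Fin n) ℝ) (R : Matrix (Fin k) (Fin k) ℝ)
    (σ : ℝ) (hσ : 0 < σ) (hQ : Q.PosDef) (hR : R.PosDef) (hΨ : Ψ.PosDef)
    (K K' : Matrix (Fin k) (Fin n) ℝ)
    (hK : specRad (A - B * K) < 1) (hK' : specRad (A - B * K') < 1)
    -- P_K, value matrix for K
    (P : Matrix (Fin n) (Fin n) ℝ) (hP : P.PosDef)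
    (hPeq : P = Q + Kᵀ * R * K + (A - B * K)ᵀ * P * (A - B * K))
    -- P_{K'}, value matrix for K'
    (P' : Matrix (Fin n) (Fin n) ℝ) (hP' : P'.PosDef)
    (hP'eq : P' = Q + K'ᵀ * R * K' + (A - B * K')ᵀ * P' * (A - B * K'))
    -- Σ_{K'}, state covariance for K'
    (Sg' : Matrix (Fin n) (Fin n) ℝ) (hSg' : Sg'.PosDef)
    (hSg'eq : Sg' = (Ψ + σ ^ 2 • (B * Bᵀ)) + (A - B * K') * Sg' * (A - B * K')ᵀ) :
    (P' * (Ψ + σ ^ 2 • (B * Bᵀ))).trace - (P * (Ψ + σ ^ 2 • (B * Bᵀ))).trace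
      = 2 * (Sg' * (K' - K)ᵀ * ((R + Bᵀ * P * B) * K - Bᵀ * P * A)).trace
        + (Sg' * (K' - K)ᵀ * (R + Bᵀ * P * B) * (K' - K)).trace := by

  set W := Ψ + σ ^ 2 • (B * Bᵀ) with hWdef
  set L' := A - B * K' with hL'def
  clear_value W L'
  have hPs : Pᵀ = P := hP.isHermitian.eq
  have hRs : Rᵀ = R := hR.isHermitian.eq
  have hSs : Sg'ᵀ = Sg' := hSg'.isHermitian.eq
  have hW : W = Sg' - L' * Sg' * L'ᵀ := eq_sub_of_add_eq hSg'eq.symm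
  have h5 : P' - L'ᵀ * P' * L' = Q + K'ᵀ * R * K' := by
    nth_rewrite 1 [hP'eq]; abel
  have h6 : P' - P - L'ᵀ * (P' - P) * L'
      = Q + K'ᵀ * R * K' + L'ᵀ * P * L' - P := by
    have hx : L'ᵀ * (P' - P) * L' = L'ᵀ * P' * L' - L'ᵀ * P * L' := by
      rw [Matrix.mul_sub, Matrix.sub_mul]
    rw [hx, ← h5]; abel
  have hadv : Q + K'ᵀ * R * K' + L'ᵀ * P * L' - P
      = (K' - K)ᵀ * (R + Bᵀ * P * B) * (K' - K)
        + (K' - K)ᵀ * ((R + Bᵀ * P * B) * K - Bᵀ * P * A)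
        + ((R + Bᵀ * P * B) * K - Bᵀ * P * A)ᵀ * (K' - K) := by
    nth_rewrite 2 [hPeq]
    rw [hL'def]
    simp only [Matrix.transpose_sub, Matrix.transpose_add, Matrix.transpose_mul,
      Matrix.transpose_transpose, hPs, hRs, Matrix.sub_mul, Matrix.mul_sub,
      Matrix.add_mul, Matrix.mul_add, Matrix.mul_assoc]
    abel
  calc (P' * W).trace - (P * W).trace
      = ((P' - P) * W).trace := by rw [Matrix.sub_mul, Matrix.trace_sub]
    _ = ((P' - P) * Sg').trace - ((P' - P) * (L' * Sg' * L'ᵀ)).trace := by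
        rw [hW, Matrix.mul_sub, Matrix.trace_sub]
    _ = ((P' - P) * Sg').trace - ((L'ᵀ * (P' - P) * L') * Sg').trace := by
        congr 1
        rw [show L' * Sg' * L'ᵀ = L' * (Sg' * L'ᵀ) by rw [Matrix.mul_assoc]]
        rw [Matrix.trace_mul_comm (P' - P) (L' * (Sg' * L'ᵀ))]
        rw [show L' * (Sg' * L'ᵀ) * (P' - P) = L' * (Sg' * (L'ᵀ * (P' - P))) by
          simp only [Matrix.mul_assoc]]
        rw [Matrix.trace_mul_comm L' (Sg' * (L'ᵀ * (P' - P)))]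
        rw [Matrix.trace_mul_comm (L'ᵀ * (P' - P) * L') Sg']
        simp only [Matrix.mul_assoc]
    _ = ((P' - P - L'ᵀ * (P' - P) * L') * Sg').trace := by
        simp only [Matrix.mul_sub, Matrix.sub_mul, Matrix.trace_sub, Matrix.mul_assoc]
    _ = (((K' - K)ᵀ * (R + Bᵀ * P * B) * (K' - K)
        + (K' - K)ᵀ * ((R + Bᵀ * P * B) * K - Bᵀ * P * A)
        + ((R + Bᵀ * P * B) * K - Bᵀ * P * A)ᵀ * (K' - K)) * Sg').trace := by
        rw [h6, hadv]
    _ = 2 * (Sg' * (K' - K)ᵀ * ((R + Bᵀ * P * B) * K - Bᵀ * P * A)).trace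
        + (Sg' * (K' - K)ᵀ * (R + Bᵀ * P * B) * (K' - K)).trace := by
        rw [Matrix.add_mul, Matrix.add_mul, Matrix.trace_add, Matrix.trace_add]
        have e1 : ((K' - K)ᵀ * (R + Bᵀ * P * B) * (K' - K) * Sg').trace
            = (Sg' * (K' - K)ᵀ * (R + Bᵀ * P * B) * (K' - K)).trace := by
          rw [Matrix.trace_mul_comm ((K' - K)ᵀ * (R + Bᵀ * P * B) * (K' - K)) Sg']
          rw [← Matrix.mul_assoc, ← Matrix.mul_assoc]
        have e2 : ((K' - K)ᵀ * ((R + Bᵀ * P * B) * K - Bᵀ * P * A) * Sg').trace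
            = (Sg' * (K' - K)ᵀ * ((R + Bᵀ * P * B) * K - Bᵀ * P * A)).trace := by
          rw [Matrix.trace_mul_comm ((K' - K)ᵀ * ((R + Bᵀ * P * B) * K - Bᵀ * P * A)) Sg']
          rw [← Matrix.mul_assoc]
        have e3 : (((R + Bᵀ * P * B) * K - Bᵀ * P * A)ᵀ * (K' - K) * Sg').trace
            = (Sg' * (K' - K)ᵀ * ((R + Bᵀ * P * B) * K - Bᵀ * P * A)).trace := by
          rw [← Matrix.trace_transpose (((R + Bᵀ * P * B) * K - Bᵀ * P * A)ᵀ * (K' - K) * Sg')]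
          simp only [Matrix.transpose_mul, Matrix.transpose_transpose, hSs]
          simp only [Matrix.mul_assoc]
        rw [e1, e2, e3]; ring
end

section
/- (Generalized monotonicity of the natural-gradient variational inequality.) For any stable policy K, 2Tr(Σ_{K*}(K − K*)ᵀE_K) ≥ J(K) − J(K*) ≥ 0. -/
open Matrix Finset

lemma aux_diag_nonneg {m : Type*} [Fintype m] [DecidableEq m] {M : Matrix m m ℝ}
    (hM : M.PosSemidef) (i : m) : 0 ≤ M i i := by
  have := hM.dotProduct_mulVec_nonneg (Pi.single i 1)
  simpa [dotProduct, Matrix.mulVec, Pi.single_apply] using this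

lemma aux_trace_nonneg {m : Type*} [Fintype m] [DecidableEq m] {S X : Matrix m m ℝ}
    (hS : S.PosSemidef) (hX : X.PosSemidef) : 0 ≤ (S * X).trace := by
  obtain ⟨C, rfl⟩ : ∃ C : Matrix m m ℝ, S = Cᵀ * C := by
    open scoped MatrixOrder Matrix.Norms.L2Operator in
    obtain ⟨C, hC⟩ := CStarAlgebra.nonneg_iff_eq_star_mul_self.mp (Matrix.nonneg_iff_posSemidef.mpr hS)
    exact ⟨C, by simpa [star_eq_conjTranspose] using hC⟩
  rw [Matrix.mul_assoc, Matrix.trace_mul_comm]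
  have h := hX.mul_mul_conjTranspose_same C
  rw [Matrix.trace]
  exact Finset.sum_nonneg fun i _ => aux_diag_nonneg h i

/-- Generalized monotonicity of the natural-gradient VI:
for any stable policy `K`, `2Tr(Σ_{K*}(K − K*)ᵀE_K) ≥ J(K) − J(K*) ≥ 0`. -/
theorem stmt_4 {n k : ℕ} (hn : 0 < n) (hk : 0 < k)
    (A : Matrix (Fin n) (Fin n) ℝ) (B : Matrix (Fin n) (Fin k) ℝ)
    (Q Ψ : Matrix (Fin n) (Fin n) ℝ) (R : Matrix (Fin k) (Fin k) ℝ)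
    (σ : ℝ) (hσ : 0 < σ) (hQ : Q.PosDef) (hR : R.PosDef) (hΨ : Ψ.PosDef)
    -- the stable policy K and its value matrix
    (K : Matrix (Fin k) (Fin n) ℝ) (hK : specRad (A - B * K) < 1)
    (P : Matrix (Fin n) (Fin n) ℝ) (hP : P.PosDef)
    (hPeq : P = Q + Kᵀ * R * K + (A - B * K)ᵀ * P * (A - B * K))
    -- the optimal stable policy K*, its value matrix and state covariance
    (Kstar : Matrix (Fin k) (Fin n) ℝ) (hKstar : specRad (A - B * Kstar) < 1)
    (Pstar : Matrix (Fin n) (Fin n) ℝ) (hPstar : Pstar.PosDef)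
    (hPstarEq : Pstar = Q + Kstarᵀ * R * Kstar
      + (A - B * Kstar)ᵀ * Pstar * (A - B * Kstar))
    (Sgstar : Matrix (Fin n) (Fin n) ℝ) (hSgstar : Sgstar.PosDef)
    (hSgstarEq : Sgstar = (Ψ + σ ^ 2 • (B * Bᵀ))
      + (A - B * Kstar) * Sgstar * (A - B * Kstar)ᵀ)
    -- K* minimizes J over all stable policies
    (hmin : ∀ (K' : Matrix (Fin k) (Fin n) ℝ) (P' : Matrix (Fin n) (Fin n) ℝ),
      specRad (A - B * K') < 1 → P'.PosDef →
      P' = Q + K'ᵀ * R * K' + (A - B * K')ᵀ * P' * (A - B * K') →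
      (Pstar * (Ψ + σ ^ 2 • (B * Bᵀ))).trace ≤ (P' * (Ψ + σ ^ 2 • (B * Bᵀ))).trace) :
    2 * (Sgstar * (K - Kstar)ᵀ * ((R + Bᵀ * P * B) * K - Bᵀ * P * A)).trace
      ≥ (P * (Ψ + σ ^ 2 • (B * Bᵀ))).trace - (Pstar * (Ψ + σ ^ 2 • (B * Bᵀ))).trace
    ∧ (P * (Ψ + σ ^ 2 • (B * Bᵀ))).trace - (Pstar * (Ψ + σ ^ 2 • (B * Bᵀ))).trace
      ≥ 0 := by
  have hRs : Rᵀ = R := by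
    rw [← Matrix.conjTranspose_eq_transpose_of_trivial]; exact hR.isHermitian.eq
  have hPsym : Pᵀ = P := by
    rw [← Matrix.conjTranspose_eq_transpose_of_trivial]; exact hP.isHermitian.eq
  have hSgsym : Sgstarᵀ = Sgstar := by
    rw [← Matrix.conjTranspose_eq_transpose_of_trivial]; exact hSgstar.isHermitian.eq
  -- abbreviations (as plain terms)
  have second : (P * (Ψ + σ ^ 2 • (B * Bᵀ))).trace
      - (Pstar * (Ψ + σ ^ 2 • (B * Bᵀ))).trace ≥ 0 := by
    have := hmin K P hK hP hPeq
    linarith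
  refine ⟨?_, second⟩
  -- W = Sgstar - Ls * Sgstar * Lsᵀ
  have hW : (Ψ + σ ^ 2 • (B * Bᵀ))
      = Sgstar - (A - B * Kstar) * Sgstar * (A - B * Kstar)ᵀ := by
    rw [eq_sub_iff_add_eq]; exact hSgstarEq.symm
  have h1 : P - Pstar = Kᵀ * R * K - Kstarᵀ * R * Kstar
      + (A - B * K)ᵀ * P * (A - B * K)
      - (A - B * Kstar)ᵀ * Pstar * (A - B * Kstar) := by
    nth_rewrite 1 [hPeq]
    nth_rewrite 1 [hPstarEq]
    abel
  -- key algebraic identity (cost difference lemma)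
  have h2 : P - Pstar - (A - B * Kstar)ᵀ * (P - Pstar) * (A - B * Kstar)
      = -((Kstar - K)ᵀ * ((R + Bᵀ * P * B) * K - Bᵀ * P * A))
        - ((R + Bᵀ * P * B) * K - Bᵀ * P * A)ᵀ * (Kstar - K)
        - (Kstar - K)ᵀ * (R + Bᵀ * P * B) * (Kstar - K) := by
    have hx : (A - B * Kstar)ᵀ * (P - Pstar) * (A - B * Kstar)
        = (A - B * Kstar)ᵀ * P * (A - B * Kstar)
          - (A - B * Kstar)ᵀ * Pstar * (A - B * Kstar) := by
      noncomm_ring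
    rw [hx, h1]
    simp only [Matrix.transpose_sub, Matrix.transpose_mul, Matrix.transpose_add,
      Matrix.transpose_transpose, hRs, hPsym, Matrix.sub_mul, Matrix.mul_sub,
      Matrix.add_mul, Matrix.mul_add, Matrix.neg_mul, Matrix.mul_neg, Matrix.mul_assoc]
    abel
  -- trace computation
  have t1 : (P * (Ψ + σ ^ 2 • (B * Bᵀ))).trace - (Pstar * (Ψ + σ ^ 2 • (B * Bᵀ))).trace
      = ((P - Pstar) * (Ψ + σ ^ 2 • (B * Bᵀ))).trace := by
    rw [Matrix.sub_mul, Matrix.trace_sub]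
  have t3 : ((P - Pstar) * ((A - B * Kstar) * Sgstar * (A - B * Kstar)ᵀ)).trace
      = ((A - B * Kstar)ᵀ * (P - Pstar) * (A - B * Kstar) * Sgstar).trace := by
    have e : (P - Pstar) * ((A - B * Kstar) * Sgstar * (A - B * Kstar)ᵀ)
        = ((P - Pstar) * (A - B * Kstar)) * Sgstar * (A - B * Kstar)ᵀ := by
      noncomm_ring
    rw [e, Matrix.trace_mul_cycle, ← Matrix.mul_assoc]
  have t4 : ((P - Pstar) * (Ψ + σ ^ 2 • (B * Bᵀ))).trace
      = ((P - Pstar - (A - B * Kstar)ᵀ * (P - Pstar) * (A - B * Kstar)) * Sgstar).trace := by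
    rw [hW]
    have e1 : (P - Pstar) * (Sgstar - (A - B * Kstar) * Sgstar * (A - B * Kstar)ᵀ)
        = (P - Pstar) * Sgstar
          - (P - Pstar) * ((A - B * Kstar) * Sgstar * (A - B * Kstar)ᵀ) := by
      noncomm_ring
    have e2 : (P - Pstar - (A - B * Kstar)ᵀ * (P - Pstar) * (A - B * Kstar)) * Sgstar
        = (P - Pstar) * Sgstar
          - ((A - B * Kstar)ᵀ * (P - Pstar) * (A - B * Kstar)) * Sgstar := by
      noncomm_ring
    rw [e1, e2, Matrix.trace_sub, Matrix.trace_sub, t3]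
  -- transpose/cyclicity juggling for the cross terms
  have t5 : ((((R + Bᵀ * P * B) * K - Bᵀ * P * A)ᵀ * (Kstar - K)) * Sgstar).trace
      = (((Kstar - K)ᵀ * ((R + Bᵀ * P * B) * K - Bᵀ * P * A)) * Sgstar).trace := by
    rw [← Matrix.trace_transpose (((R + Bᵀ * P * B) * K - Bᵀ * P * A)ᵀ * (Kstar - K) * Sgstar)]
    simp only [Matrix.transpose_mul, Matrix.transpose_transpose, hSgsym]
    rw [Matrix.trace_mul_comm, Matrix.mul_assoc]
  have t6 : (((Kstar - K)ᵀ * ((R + Bᵀ * P * B) * K - Bᵀ * P * A)) * Sgstar).trace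
      = -(Sgstar * (K - Kstar)ᵀ * ((R + Bᵀ * P * B) * K - Bᵀ * P * A)).trace := by
    rw [Matrix.trace_mul_cycle]
    have e : Sgstar * (K - Kstar)ᵀ * ((R + Bᵀ * P * B) * K - Bᵀ * P * A)
        = -(Sgstar * (Kstar - K)ᵀ * ((R + Bᵀ * P * B) * K - Bᵀ * P * A)) := by
      simp only [Matrix.transpose_sub, Matrix.sub_mul, Matrix.mul_sub, Matrix.neg_mul,
        Matrix.mul_neg]
      abel
    rw [e, Matrix.trace_neg, neg_neg]
  -- positivity of the quadratic remainder
  have hGpsd : (R + Bᵀ * P * B).PosSemidef := by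
    have h := hP.posSemidef.conjTranspose_mul_mul_same B
    rw [Matrix.conjTranspose_eq_transpose_of_trivial] at h
    exact hR.posSemidef.add h
  have hquad : ((Kstar - K)ᵀ * (R + Bᵀ * P * B) * (Kstar - K)).PosSemidef := by
    have h := hGpsd.conjTranspose_mul_mul_same (Kstar - K)
    rwa [Matrix.conjTranspose_eq_transpose_of_trivial] at h
  have hnonneg : 0 ≤ (((Kstar - K)ᵀ * (R + Bᵀ * P * B) * (Kstar - K)) * Sgstar).trace :=
    aux_trace_nonneg hquad hSgstar.posSemidef
  -- assemble
  rw [ge_iff_le, t1, t4, h2]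
  have expand : ((-((Kstar - K)ᵀ * ((R + Bᵀ * P * B) * K - Bᵀ * P * A))
        - ((R + Bᵀ * P * B) * K - Bᵀ * P * A)ᵀ * (Kstar - K)
        - (Kstar - K)ᵀ * (R + Bᵀ * P * B) * (Kstar - K)) * Sgstar).trace
      = -(((Kstar - K)ᵀ * ((R + Bᵀ * P * B) * K - Bᵀ * P * A)) * Sgstar).trace
        - ((((R + Bᵀ * P * B) * K - Bᵀ * P * A)ᵀ * (Kstar - K)) * Sgstar).trace
        - (((Kstar - K)ᵀ * (R + Bᵀ * P * B) * (Kstar - K)) * Sgstar).trace := by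
    rw [Matrix.sub_mul, Matrix.sub_mul, Matrix.neg_mul, Matrix.trace_sub, Matrix.trace_sub,
      Matrix.trace_neg]
  rw [expand, t5, t6]
  linarith
end

section
/- Let K be a stable policy and set ρ = ρ(A−BK) < 1. Then ‖Σ_K‖ ≤ Tr(Σ_K) ≤ σ_min(Q)⁻¹J(K), ‖P_K‖ ≤ Tr(P_K) ≤ σ_min(Ψ)⁻¹J(K), and (1−ρ²)⁻¹ ≤ J(K)·σ_min(Ψ)⁻¹·σ_min(Q)⁻¹. -/
open Matrix Finset

section Helpers

variable {n : ℕ}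

lemma psd_diag_nonneg {S : Matrix (Fin n) (Fin n) ℝ} (hS : S.PosSemidef) (i : Fin n) :
    0 ≤ S i i := by
  have h := hS.dotProduct_mulVec_nonneg (Pi.single i 1)
  simpa [mulVec_single, dotProduct, Pi.single_apply] using h

lemma psd_trace_nonneg {S : Matrix (Fin n) (Fin n) ℝ} (hS : S.PosSemidef) : 0 ≤ S.trace :=
  Finset.sum_nonneg fun i _ => psd_diag_nonneg hS i

lemma trace_mul_psd_nonneg {M N : Matrix (Fin n) (Fin n) ℝ} (hM : M.PosSemidef)
    (hN : N.PosSemidef) : 0 ≤ (M * N).trace := by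
  obtain ⟨C, rfl⟩ := (by open scoped MatrixOrder in exact CStarAlgebra.nonneg_iff_eq_star_mul_self.mp hM.nonneg :
    ∃ C : Matrix (Fin n) (Fin n) ℝ, M = star C * C)
  rw [mul_assoc, Matrix.trace_mul_comm]
  exact psd_trace_nonneg (hN.mul_mul_conjTranspose_same C)

lemma dotProduct_self_nonneg' (v : Fin n → ℝ) : 0 ≤ v ⬝ᵥ v :=
  Finset.sum_nonneg fun i _ => mul_self_nonneg _

lemma dotProduct_self_pos' {v : Fin n → ℝ} (hv : v ≠ 0) : 0 < v ⬝ᵥ v := by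
  obtain ⟨i, hi⟩ := Function.ne_iff.mp hv
  have hi' : v i ≠ 0 := by simpa using hi
  exact Finset.sum_pos' (fun j _ => mul_self_nonneg _)
    ⟨i, Finset.mem_univ i, mul_self_pos.mpr hi'⟩

lemma vecMulVec_mulVec (x y : Fin n → ℝ) : vecMulVec x x *ᵥ y = (x ⬝ᵥ y) • x := by
  ext i
  simp only [mulVec, dotProduct, vecMulVec_apply, Pi.smul_apply, smul_eq_mul, Finset.sum_mul]
  apply Finset.sum_congr rfl; intro j _; ring

lemma transpose_eq_self {S : Matrix (Fin n) (Fin n) ℝ} (hS : S.IsHermitian) : Sᵀ = S := by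
  rw [← conjTranspose_eq_transpose_of_trivial]; exact hS

lemma cs_psd (x : Fin n → ℝ) :
    ((x ⬝ᵥ x) • (1 : Matrix (Fin n) (Fin n) ℝ) - vecMulVec x x).PosSemidef := by
  apply Matrix.PosSemidef.of_dotProduct_mulVec_nonneg
  · unfold Matrix.IsHermitian
    rw [conjTranspose_eq_transpose_of_trivial, Matrix.transpose_sub, Matrix.transpose_smul,
      Matrix.transpose_one]
    congr 1
    ext i j
    simp [vecMulVec_apply, mul_comm]
  · intro y
    simp only [star_trivial, Matrix.sub_mulVec, dotProduct_sub, smul_mulVec,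
      Matrix.one_mulVec, dotProduct_smul, _root_.vecMulVec_mulVec, smul_eq_mul, dotProduct_comm y x]
    have hcs := Finset.sum_mul_sq_le_sq_mul_sq Finset.univ x y
    have h1 : (x ⬝ᵥ y)^2 ≤ (x ⬝ᵥ x) * (y ⬝ᵥ y) := by
      simpa [dotProduct, sq] using hcs
    nlinarith [h1]

lemma trace_mul_vecMulVec (S : Matrix (Fin n) (Fin n) ℝ) (x : Fin n → ℝ) :
    (S * vecMulVec x x).trace = x ⬝ᵥ (S *ᵥ x) := by
  simp only [Matrix.trace, Matrix.diag_apply, Matrix.mul_apply, vecMulVec_apply, dotProduct,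
    mulVec, dotProduct]
  apply Finset.sum_congr rfl; intro i _
  rw [Finset.mul_sum]
  apply Finset.sum_congr rfl; intro j _
  ring

lemma quad_le_trace {S : Matrix (Fin n) (Fin n) ℝ} (hS : S.PosSemidef) (x : Fin n → ℝ) :
    x ⬝ᵥ (S *ᵥ x) ≤ S.trace * (x ⬝ᵥ x) := by
  have h := trace_mul_psd_nonneg hS (cs_psd x)
  rw [Matrix.mul_sub, Matrix.trace_sub, trace_mul_vecMulVec] at h
  have h2 : (S * ((x ⬝ᵥ x) • (1 : Matrix (Fin n) (Fin n) ℝ))).trace = (x ⬝ᵥ x) * S.trace := by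
    rw [Matrix.mul_smul, Matrix.mul_one, Matrix.trace_smul, smul_eq_mul]
  rw [h2] at h
  linarith

lemma psd_trace_smul_one_sub {S : Matrix (Fin n) (Fin n) ℝ} (hS : S.PosSemidef) :
    (S.trace • (1 : Matrix (Fin n) (Fin n) ℝ) - S).PosSemidef := by
  apply Matrix.PosSemidef.of_dotProduct_mulVec_nonneg
  · simp [Matrix.IsHermitian, conjTranspose_sub, conjTranspose_smul, conjTranspose_one, hS.1.eq]
    exact transpose_eq_self hS.1
  · intro y
    simp only [star_trivial, Matrix.sub_mulVec, dotProduct_sub, smul_mulVec,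
      Matrix.one_mulVec, dotProduct_smul, smul_eq_mul]
    have := quad_le_trace hS y
    linarith

lemma sq_psd {S : Matrix (Fin n) (Fin n) ℝ} (hS : S.PosSemidef) : (S * S).PosSemidef := by
  nth_rewrite 1 [← hS.isHermitian]
  exact posSemidef_conjTranspose_mul_self S

lemma trace_sq_le {S : Matrix (Fin n) (Fin n) ℝ} (hS : S.PosSemidef) :
    (S * S).trace ≤ S.trace ^ 2 := by
  have h := trace_mul_psd_nonneg hS (psd_trace_smul_one_sub hS)
  rw [Matrix.mul_sub, Matrix.trace_sub, Matrix.mul_smul, Matrix.mul_one, Matrix.trace_smul,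
    smul_eq_mul] at h
  nlinarith

lemma sNorm_le_trace' {S : Matrix (Fin n) (Fin n) ℝ} (hS : S.PosSemidef) :
    sNorm S ≤ S.trace := by
  unfold sNorm
  apply ContinuousLinearMap.opNorm_le_bound _ (psd_trace_nonneg hS)
  intro x
  rw [LinearMap.coe_toContinuousLinearMap', toEuclideanLin_apply]
  set v : Fin n → ℝ := (WithLp.equiv 2 (Fin n → ℝ)) x with hv
  have hxnorm : ‖x‖ = Real.sqrt (v ⬝ᵥ v) := by
    rw [EuclideanSpace.norm_eq]
    congr 1
    simp only [Real.norm_eq_abs, sq_abs, dotProduct]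
    apply Finset.sum_congr rfl; intro i _
    rw [sq]
    rfl
  have hSxnorm : ‖(WithLp.equiv 2 (Fin n → ℝ)).symm (S *ᵥ v)‖
      = Real.sqrt ((S *ᵥ v) ⬝ᵥ (S *ᵥ v)) := by
    rw [EuclideanSpace.norm_eq]
    congr 1
    simp only [Real.norm_eq_abs, sq_abs, dotProduct]
    apply Finset.sum_congr rfl; intro i _
    rw [sq]
    rfl
  rw [hxnorm]
  erw [hSxnorm]
  have key : (S *ᵥ v) ⬝ᵥ (S *ᵥ v) ≤ S.trace ^ 2 * (v ⬝ᵥ v) := by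
    have h1 : v ⬝ᵥ ((S * S) *ᵥ v) = (S *ᵥ v) ⬝ᵥ (S *ᵥ v) := by
      rw [← Matrix.mulVec_mulVec, dotProduct_mulVec, ← Matrix.mulVec_transpose,
        transpose_eq_self hS.isHermitian]
    rw [← h1]
    calc v ⬝ᵥ ((S * S) *ᵥ v) ≤ (S * S).trace * (v ⬝ᵥ v) := quad_le_trace (sq_psd hS) v
    _ ≤ S.trace ^ 2 * (v ⬝ᵥ v) := by
        nlinarith [trace_sq_le hS, dotProduct_self_nonneg' v]
  calc Real.sqrt ((S *ᵥ v) ⬝ᵥ (S *ᵥ v)) ≤ Real.sqrt (S.trace ^ 2 * (v ⬝ᵥ v)) :=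
        Real.sqrt_le_sqrt key
  _ = S.trace * Real.sqrt (v ⬝ᵥ v) := by
      rw [Real.sqrt_mul (sq_nonneg _), Real.sqrt_sq (psd_trace_nonneg hS)]

lemma euclid_inner_eq_dot (a b : Fin n → ℝ) :
    (inner ℝ ((WithLp.equiv 2 (Fin n → ℝ)).symm a) ((WithLp.equiv 2 (Fin n → ℝ)).symm b) : ℝ)
      = a ⬝ᵥ b := by
  simp [PiLp.inner_apply, RCLike.inner_apply, dotProduct]
  exact Finset.sum_congr rfl fun i _ => mul_comm _ _

lemma dot_expansion {M : Matrix (Fin n) (Fin n) ℝ} (hM : M.IsHermitian) (x : Fin n → ℝ) :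
    x ⬝ᵥ (M *ᵥ x) = ∑ i, hM.eigenvalues i
      * (((WithLp.equiv 2 (Fin n → ℝ)) (hM.eigenvectorBasis i)) ⬝ᵥ x)^2 := by
  have key := hM.eigenvectorBasis.sum_inner_mul_inner
    ((WithLp.equiv 2 (Fin n → ℝ)).symm x) ((WithLp.equiv 2 (Fin n → ℝ)).symm (M *ᵥ x))
  set c : Fin n → (Fin n → ℝ) := fun i => (WithLp.equiv 2 (Fin n → ℝ)) (hM.eigenvectorBasis i)
    with hc
  have hb : ∀ i, hM.eigenvectorBasis i = (WithLp.equiv 2 (Fin n → ℝ)).symm (c i) := by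
    intro i; simp [hc]
  rw [euclid_inner_eq_dot] at key
  have key2 : ∑ i, (x ⬝ᵥ c i) * (c i ⬝ᵥ (M *ᵥ x)) = x ⬝ᵥ (M *ᵥ x) := by
    rw [← key]
    refine Finset.sum_congr rfl fun i _ => ?_
    rw [hb i, euclid_inner_eq_dot, euclid_inner_eq_dot]
  rw [← key2]
  apply Finset.sum_congr rfl
  intro i _
  have h1 : c i ⬝ᵥ (M *ᵥ x) = hM.eigenvalues i * (c i ⬝ᵥ x) := by
    rw [dotProduct_mulVec, ← Matrix.mulVec_transpose, transpose_eq_self hM]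
    erw [hM.mulVec_eigenvectorBasis i]
    rw [smul_dotProduct, smul_eq_mul]
    rfl
  rw [h1, dotProduct_comm x (c i), sq]
  ring

lemma dot_self_expansion {M : Matrix (Fin n) (Fin n) ℝ} (hM : M.IsHermitian) (x : Fin n → ℝ) :
    x ⬝ᵥ x = ∑ i, (((WithLp.equiv 2 (Fin n → ℝ)) (hM.eigenvectorBasis i)) ⬝ᵥ x)^2 := by
  have key := hM.eigenvectorBasis.sum_inner_mul_inner
    ((WithLp.equiv 2 (Fin n → ℝ)).symm x) ((WithLp.equiv 2 (Fin n → ℝ)).symm x)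
  set c : Fin n → (Fin n → ℝ) := fun i => (WithLp.equiv 2 (Fin n → ℝ)) (hM.eigenvectorBasis i)
    with hc
  have hb : ∀ i, hM.eigenvectorBasis i = (WithLp.equiv 2 (Fin n → ℝ)).symm (c i) := by
    intro i; simp [hc]
  rw [euclid_inner_eq_dot] at key
  have key2 : ∑ i, (x ⬝ᵥ c i) * (c i ⬝ᵥ x) = x ⬝ᵥ x := by
    rw [← key]
    refine Finset.sum_congr rfl fun i _ => ?_
    rw [hb i, euclid_inner_eq_dot, euclid_inner_eq_dot]
  rw [← key2]
  apply Finset.sum_congr rfl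
  intro i _
  rw [dotProduct_comm x (c i), sq]

lemma isLeast_eigSet (hn : 0 < n) {M : Matrix (Fin n) (Fin n) ℝ} (hM : M.IsHermitian) :
    IsLeast {r : ℝ | ∃ v : Fin n → ℝ, v ≠ 0 ∧ M.mulVec v = r • v}
      (Finset.univ.inf' (Finset.univ_nonempty_iff.mpr ⟨⟨0, hn⟩⟩) hM.eigenvalues) := by
  have hne : (Finset.univ : Finset (Fin n)).Nonempty := Finset.univ_nonempty_iff.mpr ⟨⟨0, hn⟩⟩
  set μ := Finset.univ.inf' hne hM.eigenvalues with hμ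
  constructor
  · obtain ⟨i₀, -, hi₀⟩ := Finset.exists_mem_eq_inf' hne hM.eigenvalues
    refine ⟨(WithLp.equiv 2 (Fin n → ℝ)) (hM.eigenvectorBasis i₀), ?_, ?_⟩
    · have := hM.eigenvectorBasis.orthonormal.ne_zero i₀
      simpa using this
    · erw [hM.mulVec_eigenvectorBasis i₀]
      rw [← hi₀]
      rfl
  · rintro r ⟨v, hv, hvr⟩
    have h1 : v ⬝ᵥ (M *ᵥ v) = r * (v ⬝ᵥ v) := by
      rw [hvr, dotProduct_smul, smul_eq_mul]
    have h2 := dot_expansion hM v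
    have h3 := dot_self_expansion hM v
    have h4 : μ * (v ⬝ᵥ v) ≤ v ⬝ᵥ (M *ᵥ v) := by
      rw [h2, h3, Finset.mul_sum]
      apply Finset.sum_le_sum
      intro i _
      exact mul_le_mul_of_nonneg_right (Finset.inf'_le _ (Finset.mem_univ i)) (sq_nonneg _)
    have h5 := dotProduct_self_pos' hv
    nlinarith

lemma minEig_eq (hn : 0 < n) {M : Matrix (Fin n) (Fin n) ℝ} (hM : M.IsHermitian) :
    minEig M = Finset.univ.inf' (Finset.univ_nonempty_iff.mpr ⟨⟨0, hn⟩⟩) hM.eigenvalues :=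
  (isLeast_eigSet hn hM).csInf_eq

lemma minEig_mem (hn : 0 < n) {M : Matrix (Fin n) (Fin n) ℝ} (hM : M.IsHermitian) :
    ∃ v : Fin n → ℝ, v ≠ 0 ∧ M.mulVec v = (minEig M) • v := by
  have h := (isLeast_eigSet hn hM).1
  rw [← minEig_eq hn hM] at h
  exact h

lemma minEig_pos (hn : 0 < n) {M : Matrix (Fin n) (Fin n) ℝ} (hM : M.PosDef) :
    0 < minEig M := by
  obtain ⟨v, hv, hvr⟩ := minEig_mem hn hM.isHermitian
  have h1 := hM.dotProduct_mulVec_pos hv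
  rw [star_trivial, hvr, dotProduct_smul, smul_eq_mul] at h1
  have h2 := dotProduct_self_pos' hv
  nlinarith

lemma minEig_quad (hn : 0 < n) {M : Matrix (Fin n) (Fin n) ℝ} (hM : M.IsHermitian)
    (x : Fin n → ℝ) : minEig M * (x ⬝ᵥ x) ≤ x ⬝ᵥ (M *ᵥ x) := by
  rw [minEig_eq hn hM, dot_expansion hM x, dot_self_expansion hM x, Finset.mul_sum]
  apply Finset.sum_le_sum
  intro i _
  exact mul_le_mul_of_nonneg_right (Finset.inf'_le _ (Finset.mem_univ i)) (sq_nonneg _)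

lemma psd_sub_minEig (hn : 0 < n) {M : Matrix (Fin n) (Fin n) ℝ} (hM : M.IsHermitian) :
    (M - minEig M • (1 : Matrix (Fin n) (Fin n) ℝ)).PosSemidef := by
  apply Matrix.PosSemidef.of_dotProduct_mulVec_nonneg
  · simp [Matrix.IsHermitian, conjTranspose_sub, conjTranspose_smul, conjTranspose_one, hM.eq]
    exact transpose_eq_self hM
  · intro y
    simp only [star_trivial, Matrix.sub_mulVec, dotProduct_sub, smul_mulVec,
      Matrix.one_mulVec, dotProduct_smul, smul_eq_mul]
    have := minEig_quad hn hM y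
    linarith

lemma specRad_exists_eig (hn : 0 < n) (M : Matrix (Fin n) (Fin n) ℝ) :
    ∃ z : ℂ, ‖z‖ = specRad M ∧
      ∃ u : Fin n → ℂ, u ≠ 0 ∧ (M.map Complex.ofReal)ᵀ *ᵥ u = z • u := by
  haveI : Nonempty (Fin n) := ⟨⟨0, hn⟩⟩
  set Mc := M.map Complex.ofReal with hMc
  have hne : (spectrum ℂ Mc).Nonempty :=
    spectrum.nonempty_of_isAlgClosed_of_finiteDimensional ℂ Mc
  have hfin : (spectrum ℂ Mc).Finite := Matrix.finite_spectrum Mc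
  set T : Set ℝ := {r : ℝ | ∃ z ∈ spectrum ℂ Mc, r = ‖z‖} with hT
  have hTeq : T = (‖·‖) '' spectrum ℂ Mc := by
    ext r
    simp only [hT, Set.mem_setOf_eq, Set.mem_image]
    constructor
    · rintro ⟨z, hz, rfl⟩; exact ⟨z, hz, rfl⟩
    · rintro ⟨z, hz, rfl⟩; exact ⟨z, hz, rfl⟩
  have hTne : T.Nonempty := by
    obtain ⟨z, hz⟩ := hne
    exact ⟨‖z‖, z, hz, rfl⟩
  have hTfin : T.Finite := hTeq ▸ hfin.image _
  have hmem : sSup T ∈ T := hTne.csSup_mem hTfin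
  obtain ⟨z, hz, hzabs⟩ := hmem
  refine ⟨z, hzabs.symm, ?_⟩
  have hdet : ((algebraMap ℂ (Matrix (Fin n) (Fin n) ℂ)) z - Mc).det = 0 := by
    by_contra h
    exact (spectrum.mem_iff.mp hz) (((Matrix.isUnit_iff_isUnit_det _)).mpr (Ne.isUnit h))
  have halg : (algebraMap ℂ (Matrix (Fin n) (Fin n) ℂ)) z = z • 1 := by
    rw [Matrix.smul_one_eq_diagonal]; rfl
  have hdetT : (z • (1 : Matrix (Fin n) (Fin n) ℂ) - Mcᵀ).det = 0 := by
    have : (z • (1 : Matrix (Fin n) (Fin n) ℂ) - Mcᵀ) =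
        ((algebraMap ℂ (Matrix (Fin n) (Fin n) ℂ)) z - Mc)ᵀ := by
      rw [Matrix.transpose_sub, halg, Matrix.transpose_smul, Matrix.transpose_one]
    rw [this, Matrix.det_transpose, hdet]
  obtain ⟨u, hu, huv⟩ := (Matrix.exists_mulVec_eq_zero_iff).mpr hdetT
  refine ⟨u, hu, ?_⟩
  rw [Matrix.sub_mulVec, smul_mulVec, Matrix.one_mulVec] at huv
  have := sub_eq_zero.mp huv
  exact this.symm

lemma specRad_nonneg (hn : 0 < n) (M : Matrix (Fin n) (Fin n) ℝ) : 0 ≤ specRad M := by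
  obtain ⟨z, hz, -⟩ := specRad_exists_eig hn M
  rw [← hz]
  exact norm_nonneg z

lemma map_mulVec_star (M : Matrix (Fin n) (Fin n) ℝ) (u : Fin n → ℂ) :
    (M.map Complex.ofReal) *ᵥ (star u) = star ((M.map Complex.ofReal) *ᵥ u) := by
  funext i
  simp only [mulVec, dotProduct, Matrix.map_apply, Pi.star_apply, star_sum, star_mul',
    Complex.star_def, Complex.conj_ofReal]

lemma re_quad (M : Matrix (Fin n) (Fin n) ℝ) (u : Fin n → ℂ) :
    (star u ⬝ᵥ ((M.map Complex.ofReal) *ᵥ u)).re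
      = (fun i => (u i).re) ⬝ᵥ (M *ᵥ fun i => (u i).re)
        + (fun i => (u i).im) ⬝ᵥ (M *ᵥ fun i => (u i).im) := by
  simp only [dotProduct, mulVec, Matrix.map_apply, Pi.star_apply, Complex.star_def,
    Finset.mul_sum, Complex.re_sum]
  rw [← Finset.sum_add_distrib]
  apply Finset.sum_congr rfl
  intro i _
  rw [← Finset.sum_add_distrib]
  apply Finset.sum_congr rfl
  intro j _
  simp only [Complex.mul_re, Complex.mul_im, Complex.conj_re, Complex.conj_im, Complex.ofReal_re,
    Complex.ofReal_im]
  ring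

end Helpers

/-- for stable `K` with `ρ = ρ(A−BK) < 1`:
`‖Σ_K‖ ≤ Tr(Σ_K) ≤ σ_min(Q)⁻¹J(K)`, `‖P_K‖ ≤ Tr(P_K) ≤ σ_min(Ψ)⁻¹J(K)`, and
`(1−ρ²)⁻¹ ≤ J(K)·σ_min(Ψ)⁻¹·σ_min(Q)⁻¹`. -/
theorem stmt_5 {n k : ℕ} (hn : 0 < n) (hk : 0 < k)
    (A : Matrix (Fin n) (Fin n) ℝ) (B : Matrix (Fin n) (Fin k) ℝ)
    (Q Ψ : Matrix (Fin n) (Fin n) ℝ) (R : Matrix (Fin k) (Fin k) ℝ)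
    (σ : ℝ) (hσ : 0 < σ) (hQ : Q.PosDef) (hR : R.PosDef) (hΨ : Ψ.PosDef)
    (K : Matrix (Fin k) (Fin n) ℝ) (hK : specRad (A - B * K) < 1)
    (P Sg : Matrix (Fin n) (Fin n) ℝ) (hP : P.PosDef) (hSg : Sg.PosDef)
    (hPeq : P = Q + Kᵀ * R * K + (A - B * K)ᵀ * P * (A - B * K))
    (hSgEq : Sg = (Ψ + σ ^ 2 • (B * Bᵀ)) + (A - B * K) * Sg * (A - B * K)ᵀ) :
    sNorm Sg ≤ Sg.trace
    ∧ Sg.trace ≤ (minEig Q)⁻¹ * (P * (Ψ + σ ^ 2 • (B * Bᵀ))).trace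
    ∧ sNorm P ≤ P.trace
    ∧ P.trace ≤ (minEig Ψ)⁻¹ * (P * (Ψ + σ ^ 2 • (B * Bᵀ))).trace
    ∧ (1 - specRad (A - B * K) ^ 2)⁻¹
        ≤ (P * (Ψ + σ ^ 2 • (B * Bᵀ))).trace * (minEig Ψ)⁻¹ * (minEig Q)⁻¹ := by
  set L : Matrix (Fin n) (Fin n) ℝ := A - B * K with hL
  set W : Matrix (Fin n) (Fin n) ℝ := Ψ + σ ^ 2 • (B * Bᵀ) with hWdef
  set J : ℝ := (P * W).trace with hJ
  have hmQ : 0 < minEig Q := minEig_pos hn hQ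
  have hmΨ : 0 < minEig Ψ := minEig_pos hn hΨ
  have hBBt : (B * Bᵀ).PosSemidef := by
    have := posSemidef_self_mul_conjTranspose B
    rwa [conjTranspose_eq_transpose_of_trivial] at this
  -- the key trace identity : J = Tr((Q + KᵀRK) Σ)
  have hW : W = Sg - L * Sg * Lᵀ := eq_sub_of_add_eq hSgEq.symm
  have hLPL : Lᵀ * P * L = P - (Q + Kᵀ * R * K) := by
    conv_rhs => rw [hPeq]
    abel
  have htraceJ : J = ((Q + Kᵀ * R * K) * Sg).trace := by
    have e1 : (P * (L * Sg * Lᵀ)).trace = ((Lᵀ * P * L) * Sg).trace := by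
      rw [show P * (L * Sg * Lᵀ) = (P * L) * Sg * Lᵀ from by noncomm_ring,
        Matrix.trace_mul_cycle (P * L) Sg Lᵀ,
        show Lᵀ * (P * L) * Sg = (Lᵀ * P * L) * Sg from by noncomm_ring]
    calc J = (P * Sg).trace - (P * (L * Sg * Lᵀ)).trace := by
            rw [hJ, hW, Matrix.mul_sub, Matrix.trace_sub]
    _ = (P * Sg).trace - ((P - (Q + Kᵀ * R * K)) * Sg).trace := by rw [e1, hLPL]
    _ = ((Q + Kᵀ * R * K) * Sg).trace := by
        rw [Matrix.sub_mul, Matrix.trace_sub]; ring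
  -- item 2
  have hKRK : (Kᵀ * R * K).PosSemidef := by
    have := hR.posSemidef.conjTranspose_mul_mul_same K
    rwa [conjTranspose_eq_transpose_of_trivial] at this
  have h2' : minEig Q * Sg.trace ≤ J := by
    have ha : 0 ≤ ((Q - minEig Q • 1) * Sg).trace :=
      trace_mul_psd_nonneg (psd_sub_minEig hn hQ.isHermitian) hSg.posSemidef
    have hb : 0 ≤ ((Kᵀ * R * K) * Sg).trace := trace_mul_psd_nonneg hKRK hSg.posSemidef
    rw [Matrix.sub_mul, Matrix.trace_sub, smul_mul_assoc, Matrix.one_mul, Matrix.trace_smul,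
      smul_eq_mul] at ha
    rw [htraceJ, Matrix.add_mul, Matrix.trace_add]
    linarith
  have h2 : Sg.trace ≤ (minEig Q)⁻¹ * J := (le_inv_mul_iff₀ hmQ).mpr h2'
  -- item 4
  have h4' : minEig Ψ * P.trace ≤ J := by
    have ha : 0 ≤ (P * (Ψ - minEig Ψ • 1)).trace :=
      trace_mul_psd_nonneg hP.posSemidef (psd_sub_minEig hn hΨ.isHermitian)
    have hb : 0 ≤ (P * (σ ^ 2 • (B * Bᵀ))).trace := by
      rw [Matrix.mul_smul, Matrix.trace_smul, smul_eq_mul]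
      exact mul_nonneg (sq_nonneg σ) (trace_mul_psd_nonneg hP.posSemidef hBBt)
    rw [Matrix.mul_sub, Matrix.trace_sub, Matrix.mul_smul, Matrix.mul_one, Matrix.trace_smul,
      smul_eq_mul, Matrix.trace_mul_comm] at ha
    have hexp : J = (P * Ψ).trace + (P * (σ ^ 2 • (B * Bᵀ))).trace := by
      rw [hJ, hWdef, Matrix.mul_add, Matrix.trace_add]
    rw [Matrix.trace_mul_comm] at hexp
    rw [hexp]
    linarith
  have h4 : P.trace ≤ (minEig Ψ)⁻¹ * J := (le_inv_mul_iff₀ hmΨ).mpr h4'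
  -- item 5
  obtain ⟨z, hzabs, u, hu, huv⟩ := specRad_exists_eig hn L
  set x : Fin n → ℝ := fun i => (u i).re with hx
  set y : Fin n → ℝ := fun i => (u i).im with hy
  set N : ℝ := x ⬝ᵥ x + y ⬝ᵥ y with hN
  have hNpos : 0 < N := by
    obtain ⟨i, hi⟩ := Function.ne_iff.mp hu
    have hi' : u i ≠ 0 := by simpa using hi
    have : x i ≠ 0 ∨ y i ≠ 0 := by
      by_contra h
      push_neg at h
      exact hi' (Complex.ext h.1 h.2)
    rcases this with h | h
    · have hx0 : x ≠ 0 := Function.ne_iff.mpr ⟨i, by simpa using h⟩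
      have := dotProduct_self_pos' hx0
      have := dotProduct_self_nonneg' y
      rw [hN]; linarith
    · have hy0 : y ≠ 0 := Function.ne_iff.mpr ⟨i, by simpa using h⟩
      have := dotProduct_self_pos' hy0
      have := dotProduct_self_nonneg' x
      rw [hN]; linarith
  -- complex Lyapunov identity
  have hmapEq : Sg.map Complex.ofReal
      = W.map Complex.ofReal
        + (L.map Complex.ofReal) * (Sg.map Complex.ofReal) * (L.map Complex.ofReal)ᵀ := by
    have : Sg.map ⇑(algebraMap ℝ ℂ)
        = W.map ⇑(algebraMap ℝ ℂ)
          + (L.map ⇑(algebraMap ℝ ℂ)) * (Sg.map ⇑(algebraMap ℝ ℂ))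
            * (L.map ⇑(algebraMap ℝ ℂ))ᵀ := by
      conv_lhs => rw [hSgEq]
      rw [Matrix.map_add _ (fun a b => map_add (algebraMap ℝ ℂ) a b), Matrix.map_mul,
        Matrix.map_mul, Matrix.transpose_map]
    simpa only [Complex.coe_algebraMap] using this
  set q : ℂ := star u ⬝ᵥ ((Sg.map Complex.ofReal) *ᵥ u) with hq
  set w0 : ℂ := star u ⬝ᵥ ((W.map Complex.ofReal) *ᵥ u) with hw0
  have hkey : q = w0 + (z * (starRingEnd ℂ) z) * q := by
    have e0 : (Sg.map Complex.ofReal) *ᵥ u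
        = (W.map Complex.ofReal) *ᵥ u
          + ((L.map Complex.ofReal) * (Sg.map Complex.ofReal) * (L.map Complex.ofReal)ᵀ) *ᵥ u := by
      conv_lhs => rw [hmapEq]
      rw [Matrix.add_mulVec]
    have e1 : ((L.map Complex.ofReal) * (Sg.map Complex.ofReal) * (L.map Complex.ofReal)ᵀ) *ᵥ u
        = z • ((L.map Complex.ofReal) *ᵥ ((Sg.map Complex.ofReal) *ᵥ u)) := by
      rw [← Matrix.mulVec_mulVec, ← Matrix.mulVec_mulVec, huv, Matrix.mulVec_smul,
        Matrix.mulVec_smul]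
    have e2 : star u ⬝ᵥ ((L.map Complex.ofReal) *ᵥ ((Sg.map Complex.ofReal) *ᵥ u))
        = (starRingEnd ℂ) z * q := by
      rw [dotProduct_mulVec, ← Matrix.mulVec_transpose, ← Matrix.transpose_map,
        map_mulVec_star, Matrix.transpose_map, huv, star_smul, smul_dotProduct, hq]
      rfl
    calc q = star u ⬝ᵥ ((W.map Complex.ofReal) *ᵥ u)
          + star u ⬝ᵥ (((L.map Complex.ofReal) * (Sg.map Complex.ofReal)
            * (L.map Complex.ofReal)ᵀ) *ᵥ u) := by
          rw [hq, e0, dotProduct_add]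
    _ = w0 + z * ((starRingEnd ℂ) z * q) := by
        rw [e1, dotProduct_smul, smul_eq_mul, e2, hw0]
    _ = w0 + (z * (starRingEnd ℂ) z) * q := by ring
  have hzsq : z * (starRingEnd ℂ) z = ((‖z‖ ^ 2 : ℝ) : ℂ) := by
    rw [Complex.mul_conj, Complex.sq_norm]
  have hre : q.re = w0.re + (‖z‖) ^ 2 * q.re := by
    conv_lhs => rw [hkey]
    rw [hzsq, Complex.add_re, Complex.re_ofReal_mul]
  -- real bounds
  have hq_re : q.re = x ⬝ᵥ (Sg *ᵥ x) + y ⬝ᵥ (Sg *ᵥ y) := re_quad Sg u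
  have hw0_re : w0.re = x ⬝ᵥ (W *ᵥ x) + y ⬝ᵥ (W *ᵥ y) := re_quad W u
  have hq_up : q.re ≤ Sg.trace * N := by
    rw [hq_re, hN, mul_add]
    exact add_le_add (quad_le_trace hSg.posSemidef x) (quad_le_trace hSg.posSemidef y)
  have hWquad : ∀ v : Fin n → ℝ, minEig Ψ * (v ⬝ᵥ v) ≤ v ⬝ᵥ (W *ᵥ v) := by
    intro v
    have h1 : v ⬝ᵥ (W *ᵥ v) = v ⬝ᵥ (Ψ *ᵥ v) + σ ^ 2 * (v ⬝ᵥ ((B * Bᵀ) *ᵥ v)) := by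
      rw [hWdef, Matrix.add_mulVec, dotProduct_add, smul_mulVec, dotProduct_smul,
        smul_eq_mul]
    have h2 : 0 ≤ v ⬝ᵥ ((B * Bᵀ) *ᵥ v) := by
      have := hBBt.dotProduct_mulVec_nonneg v
      rwa [star_trivial] at this
    have h3 := minEig_quad hn hΨ.isHermitian v
    rw [h1]
    nlinarith [sq_nonneg σ]
  have hw0_lo : minEig Ψ * N ≤ w0.re := by
    rw [hw0_re, hN, mul_add]
    exact add_le_add (hWquad x) (hWquad y)
  -- put together
  set ρ : ℝ := specRad L with hρ
  have hρ0 : 0 ≤ ρ := specRad_nonneg hn L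
  have hρ1 : ρ < 1 := hK
  have ha : 0 < 1 - ρ ^ 2 := by nlinarith
  have heq : (1 - ρ ^ 2) * q.re = w0.re := by
    rw [← hzabs]
    linarith [hre]
  have h5' : minEig Ψ * minEig Q ≤ (1 - ρ ^ 2) * J := by
    have s1 : minEig Ψ * N ≤ (1 - ρ ^ 2) * (Sg.trace * N) := by
      calc minEig Ψ * N ≤ (1 - ρ ^ 2) * q.re := by rw [heq]; exact hw0_lo
      _ ≤ (1 - ρ ^ 2) * (Sg.trace * N) := by
          exact mul_le_mul_of_nonneg_left hq_up ha.le
    have s2 : minEig Ψ ≤ (1 - ρ ^ 2) * Sg.trace := by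
      have := (mul_le_mul_iff_left₀ hNpos).mp (by linarith [s1] : minEig Ψ * N ≤ ((1 - ρ ^ 2) * Sg.trace) * N)
      linarith
    calc minEig Ψ * minEig Q ≤ ((1 - ρ ^ 2) * Sg.trace) * minEig Q :=
          mul_le_mul_of_nonneg_right s2 hmQ.le
    _ = (1 - ρ ^ 2) * (minEig Q * Sg.trace) := by ring
    _ ≤ (1 - ρ ^ 2) * J := mul_le_mul_of_nonneg_left h2' ha.le
  have h5 : (1 - ρ ^ 2)⁻¹ ≤ J * (minEig Ψ)⁻¹ * (minEig Q)⁻¹ := by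
    rw [inv_eq_one_div, div_le_iff₀ ha]
    calc (1 : ℝ) = (minEig Ψ * minEig Q) * ((minEig Ψ)⁻¹ * (minEig Q)⁻¹) := by
          field_simp
    _ ≤ ((1 - ρ ^ 2) * J) * ((minEig Ψ)⁻¹ * (minEig Q)⁻¹) := by
        apply mul_le_mul_of_nonneg_right h5' (by positivity)
    _ = J * (minEig Ψ)⁻¹ * (minEig Q)⁻¹ * (1 - ρ ^ 2) := by ring
  exact ⟨sNorm_le_trace' hSg.posSemidef, h2, sNorm_le_trace' hP.posSemidef, h4, h5⟩
end

section
/- (Stability of the exact natural gradient step.) Let K be a stable policy and let η ≥ 0 satisfy η ≤ ‖R + BᵀP_KB‖⁻¹. Then the policy K' = K − 2ηE_K is stable, i.e., ρ(A − BK') < 1. -/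
open Matrix Finset

/-! ### Auxiliary lemmas -/

lemma mapC_mul {a b c : ℕ} (M : Matrix (Fin a) (Fin b) ℝ) (N : Matrix (Fin b) (Fin c) ℝ) :
    (M * N).map Complex.ofReal = M.map Complex.ofReal * N.map Complex.ofReal := by
  ext i j
  simp [Matrix.mul_apply]

lemma mapC_sub {a b : ℕ} (M N : Matrix (Fin a) (Fin b) ℝ) :
    (M - N).map Complex.ofReal = M.map Complex.ofReal - N.map Complex.ofReal := by
  ext i j
  simp

lemma mapC_transpose {a b : ℕ} (M : Matrix (Fin a) (Fin b) ℝ) :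
    (Mᵀ).map Complex.ofReal = (M.map Complex.ofReal)ᵀ := by
  ext i j
  simp

open scoped MatrixOrder in
/-- The complexified quadratic form of a real positive definite matrix is positive. -/
lemma cquad_posDef {d : ℕ} {X : Matrix (Fin d) (Fin d) ℝ} (hX : X.PosDef)
    (v : Fin d → ℂ) (hv : v ≠ 0) :
    0 < (star v ⬝ᵥ (X.map Complex.ofReal) *ᵥ v).re ∧
      (star v ⬝ᵥ (X.map Complex.ofReal) *ᵥ v).im = 0 := by
  have hs := hX.posSemidef
  set S := CFC.sqrt X with hSdef
  have hSS : S * S = X := by rw [← sq]; exact CFC.sq_sqrt X hs.nonneg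
  have hSherm : Sᵀ = S := by
    have := (CFC.sqrt_nonneg X).posSemidef.isHermitian
    rwa [Matrix.IsHermitian, Matrix.conjTranspose_eq_transpose_of_trivial] at this
  set Sc : Matrix (Fin d) (Fin d) ℂ := S.map Complex.ofReal with hSc
  have hScH : Scᴴ = Sc := by
    ext i j
    simp only [Matrix.conjTranspose_apply, hSc, Matrix.map_apply, Complex.star_def,
      Complex.conj_ofReal]
    exact congrArg Complex.ofReal (congrFun (congrFun hSherm i) j)
  have hdetS : S.det ≠ 0 := by
    intro h
    have : X.det = S.det * S.det := by rw [← hSS, Matrix.det_mul]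
    rw [h, mul_zero] at this
    exact hX.det_pos.ne' this
  have hdetSc : Sc.det ≠ 0 := by
    have : Sc.det = (S.det : ℂ) := by
      rw [hSc]
      exact (RingHom.map_det Complex.ofRealHom S).symm
    rw [this]
    exact_mod_cast hdetS
  set w := Sc *ᵥ v with hw
  have hwne : w ≠ 0 := by
    intro h
    exact hdetSc (Matrix.exists_mulVec_eq_zero_iff.mp ⟨v, hv, h⟩)
  have hmap : X.map Complex.ofReal = Sc * Sc := by rw [← hSS]; exact mapC_mul S S
  have hform : star v ⬝ᵥ (X.map Complex.ofReal) *ᵥ v = star w ⬝ᵥ w := by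
    rw [hmap, ← Matrix.mulVec_mulVec, Matrix.dotProduct_mulVec, hw]
    congr 1
    rw [Matrix.star_mulVec, hScH]
  rw [hform]
  obtain ⟨i0, hi0⟩ := Function.ne_iff.mp hwne
  constructor
  · have : (star w ⬝ᵥ w).re = ∑ i, Complex.normSq (w i) := by
      simp [dotProduct, Complex.re_sum, Complex.normSq_apply, Complex.mul_re]
    rw [this]
    exact Finset.sum_pos' (fun i _ => Complex.normSq_nonneg _)
      ⟨i0, Finset.mem_univ _, Complex.normSq_pos.mpr hi0⟩
  · simp [dotProduct, Complex.im_sum, Complex.mul_im]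
    ring_nf
    simp [mul_comm]

/-- Lyapunov stability: if `P ≻ 0` and `P - MᵀPM ≻ 0` then the spectral radius of `M` is `< 1`. -/
lemma lyapunov {d : ℕ} {M P : Matrix (Fin d) (Fin d) ℝ} (hP : P.PosDef)
    (hdiff : (P - Mᵀ * P * M).PosDef) : specRad M < 1 := by
  set Mc : Matrix (Fin d) (Fin d) ℂ := M.map Complex.ofReal with hMc
  have key : ∀ z ∈ spectrum ℂ Mc, ‖z‖ < 1 := by
    intro z hz
    rw [spectrum.mem_iff] at hz
    have hdet0 : (z • (1 : Matrix (Fin d) (Fin d) ℂ) - Mc).det = 0 := by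
      by_contra h
      exact hz (by
        rw [Algebra.algebraMap_eq_smul_one]
        exact (Matrix.isUnit_iff_isUnit_det _).mpr (isUnit_iff_ne_zero.mpr h))
    obtain ⟨v, hv, hveq⟩ := Matrix.exists_mulVec_eq_zero_iff.mpr hdet0
    have hev : Mc *ᵥ v = z • v := by
      rw [Matrix.sub_mulVec, Matrix.smul_mulVec, Matrix.one_mulVec] at hveq
      exact (sub_eq_zero.mp hveq).symm
    obtain ⟨hre, him⟩ := cquad_posDef hP v hv
    obtain ⟨hre2, _⟩ := cquad_posDef hdiff v hv
    set Pc : Matrix (Fin d) (Fin d) ℂ := P.map Complex.ofReal with hPc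
    set q : ℂ := star v ⬝ᵥ Pc *ᵥ v with hq
    have hMtH : (Mc)ᵀ = (Mc)ᴴ := by
      ext i j
      simp [Matrix.conjTranspose_apply, hMc, Complex.conj_ofReal]
    have hform : star v ⬝ᵥ ((P - Mᵀ * P * M).map Complex.ofReal) *ᵥ v
        = (1 - (Complex.normSq z : ℂ)) * q := by
      rw [mapC_sub, mapC_mul, mapC_mul, mapC_transpose, ← hPc, ← hMc,
        Matrix.sub_mulVec, dotProduct_sub, hMtH]
      have h1 : (Mcᴴ * Pc * Mc) *ᵥ v = Mcᴴ *ᵥ (Pc *ᵥ (z • v)) := by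
        rw [← hev, Matrix.mulVec_mulVec, Matrix.mulVec_mulVec]
      rw [h1, Matrix.dotProduct_mulVec (star v) Mcᴴ, ← Matrix.star_mulVec, hev, Matrix.mulVec_smul,
        dotProduct_smul, star_smul, smul_dotProduct]
      simp only [smul_eq_mul, ← hq, Complex.star_def]
      linear_combination (-q) * Complex.mul_conj z
    rw [hform] at hre2
    have hre2' : 0 < (1 - Complex.normSq z) * q.re := by
      have : ((1 - (Complex.normSq z : ℂ)) * q).re = (1 - Complex.normSq z) * q.re := by
        simp [Complex.mul_re, Complex.sub_im, Complex.sub_re, him]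
      rwa [this] at hre2
    have hns : Complex.normSq z < 1 := by nlinarith
    have habs : ‖z‖ ^ 2 = Complex.normSq z := Complex.sq_norm z
    nlinarith [norm_nonneg z]
  rw [specRad]
  set T : Set ℝ := {r : ℝ | ∃ z ∈ spectrum ℂ (M.map Complex.ofReal), r = ‖z‖} with hT
  have hTim : T = (fun z : ℂ => ‖z‖) '' spectrum ℂ Mc := by
    ext r
    simp only [hT, Set.mem_setOf_eq, Set.mem_image, ← hMc]
    constructor
    · rintro ⟨z, hz, rfl⟩; exact ⟨z, hz, rfl⟩
    · rintro ⟨z, hz, rfl⟩; exact ⟨z, hz, rfl⟩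
  have hfin : T.Finite := by
    rw [hTim]
    exact (Matrix.finite_spectrum Mc).image _
  rcases T.eq_empty_or_nonempty with h | h
  · rw [h, Real.sSup_empty]; norm_num
  · have hmem := h.csSup_mem hfin
    rw [hTim] at hmem
    obtain ⟨z, hz, hzeq⟩ := hmem
    rw [hTim, ← hzeq]
    exact key z hz

lemma dotProduct_mulVec_le_sNorm {k : ℕ} (G : Matrix (Fin k) (Fin k) ℝ) (x : Fin k → ℝ) :
    x ⬝ᵥ G *ᵥ x ≤ sNorm G * (x ⬝ᵥ x) := by
  set v : EuclideanSpace ℝ (Fin k) := (WithLp.equiv 2 _).symm x with hv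
  have h1 : inner ℝ v ((Matrix.toEuclideanLin G) v) = x ⬝ᵥ G *ᵥ x := by
    simp [hv, EuclideanSpace.inner_toLp_toLp, Matrix.toLin'_apply, star_trivial, dotProduct_comm]
  have h2 : inner ℝ v v = x ⬝ᵥ x := by
    exact (EuclideanSpace.inner_toLp_toLp x x).trans (by simp [star_trivial])
  have h3 := real_inner_le_norm v ((Matrix.toEuclideanLin G) v)
  have h4 : ‖(Matrix.toEuclideanLin G) v‖ ≤ sNorm G * ‖v‖ := by
    exact (LinearMap.toContinuousLinearMap (Matrix.toEuclideanLin G)).le_opNorm v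
  have h5 : (inner ℝ v v : ℝ) = ‖v‖ * ‖v‖ := real_inner_self_eq_norm_mul_norm v
  rw [← h1, ← h2, h5]
  nlinarith [norm_nonneg v, mul_le_mul_of_nonneg_left h4 (norm_nonneg v)]

lemma posSemidef_smul' {k : ℕ} {M : Matrix (Fin k) (Fin k) ℝ} (h : M.PosSemidef) {c : ℝ}
    (hc : 0 ≤ c) : (c • M).PosSemidef := by
  refine Matrix.PosSemidef.of_dotProduct_mulVec_nonneg ?_ (fun x => ?_)
  · have h1 := h.isHermitian
    rw [Matrix.IsHermitian] at h1 ⊢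
    rw [Matrix.conjTranspose_smul, h1]
    simp
  · rw [Matrix.smul_mulVec, dotProduct_smul, smul_eq_mul]
    exact mul_nonneg hc (h.dotProduct_mulVec_nonneg x)

set_option maxHeartbeats 4000000 in
/-- Stability of the exact natural gradient step:
if `0 ≤ η ≤ ‖R + BᵀP_KB‖⁻¹` then `K' = K − 2ηE_K` is stable. -/
theorem stmt_7 {n k : ℕ} (hn : 0 < n) (hk : 0 < k)
    (A : Matrix (Fin n) (Fin n) ℝ) (B : Matrix (Fin n) (Fin k) ℝ)
    (Q Ψ : Matrix (Fin n) (Fin n) ℝ) (R : Matrix (Fin k) (Fin k) ℝ)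
    (σ : ℝ) (hσ : 0 < σ) (hQ : Q.PosDef) (hR : R.PosDef) (hΨ : Ψ.PosDef)
    (K : Matrix (Fin k) (Fin n) ℝ) (hK : specRad (A - B * K) < 1)
    (P : Matrix (Fin n) (Fin n) ℝ) (hP : P.PosDef)
    (hPeq : P = Q + Kᵀ * R * K + (A - B * K)ᵀ * P * (A - B * K))
    (η : ℝ) (hη0 : 0 ≤ η) (hη : η ≤ (sNorm (R + Bᵀ * P * B))⁻¹) :
    specRad (A - B * (K - (2 * η) • ((R + Bᵀ * P * B) * K - Bᵀ * P * A))) < 1 := by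
  obtain ⟨G, hGdef⟩ : ∃ G : Matrix (Fin k) (Fin k) ℝ, G = R + Bᵀ * P * B := ⟨_, rfl⟩
  obtain ⟨E, hEdef⟩ : ∃ E : Matrix (Fin k) (Fin n) ℝ, E = G * K - Bᵀ * P * A := ⟨_, rfl⟩
  rw [show R + Bᵀ * P * B = G from hGdef.symm]
  rw [show G * K - Bᵀ * P * A = E from hEdef.symm]
  rw [show sNorm (R + Bᵀ * P * B) = sNorm G from by rw [hGdef]] at hη
  have hPt : Pᵀ = P := by
    have := hP.isHermitian
    rwa [Matrix.IsHermitian, Matrix.conjTranspose_eq_transpose_of_trivial] at this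
  have hRt : Rᵀ = R := by
    have := hR.isHermitian
    rwa [Matrix.IsHermitian, Matrix.conjTranspose_eq_transpose_of_trivial] at this
  have hGpos : G.PosDef := by
    rw [hGdef]
    refine hR.add_posSemidef ?_
    have := hP.posSemidef.conjTranspose_mul_mul_same B
    rwa [Matrix.conjTranspose_eq_transpose_of_trivial] at this
  have hGt : Gᵀ = G := by
    have := hGpos.isHermitian
    rwa [Matrix.IsHermitian, Matrix.conjTranspose_eq_transpose_of_trivial] at this
  have hs0 : 0 ≤ sNorm G := by unfold sNorm; exact norm_nonneg _
  have hone : η * sNorm G ≤ 1 := by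
    rcases eq_or_lt_of_le hs0 with h | h
    · rw [← h, mul_zero]; norm_num
    · calc η * sNorm G ≤ (sNorm G)⁻¹ * sNorm G :=
            mul_le_mul_of_nonneg_right hη (le_of_lt h)
        _ = 1 := inv_mul_cancel₀ (ne_of_gt h)
  have hpsd1 : ((1 : Matrix (Fin k) (Fin k) ℝ) - η • G).PosSemidef := by
    refine Matrix.PosSemidef.of_dotProduct_mulVec_nonneg ?_ ?_
    · rw [Matrix.IsHermitian, Matrix.conjTranspose_sub, Matrix.conjTranspose_smul,
        Matrix.conjTranspose_one, hGpos.isHermitian.eq]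
      simp
    · intro x
      have hsx : star x = x := by funext i; simp
      rw [hsx, Matrix.sub_mulVec, dotProduct_sub, Matrix.one_mulVec,
        Matrix.smul_mulVec, dotProduct_smul, smul_eq_mul]
      have hb := dotProduct_mulVec_le_sNorm G x
      have hGx : 0 ≤ x ⬝ᵥ G *ᵥ x := by
        have := hGpos.posSemidef.dotProduct_mulVec_nonneg x
        rwa [hsx] at this
      have hxx : 0 ≤ x ⬝ᵥ x := Finset.sum_nonneg fun i _ => mul_self_nonneg (x i)
      nlinarith [mul_le_mul_of_nonneg_left hb hη0, mul_le_mul_of_nonneg_right hone hxx]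
  obtain ⟨S, hSdef⟩ : ∃ S : Matrix (Fin k) (Fin k) ℝ, S = (2 * η) • (1 : Matrix (Fin k) (Fin k) ℝ) := ⟨_, rfl⟩
  have hSE : S * E = (2 * η) • E := by rw [hSdef, Matrix.smul_mul, Matrix.one_mul]
  have hSt : Sᵀ = S := by rw [hSdef, Matrix.transpose_smul, Matrix.transpose_one]
  rw [← hSE]
  have key : P - (A - B * (K - S * E))ᵀ * P * (A - B * (K - S * E))
      = Q + (K - S * E)ᵀ * R * (K - S * E)
        + (Eᵀ * S * E + Eᵀ * S * E - Eᵀ * S * G * S * E) := by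
    nth_rewrite 1 [hPeq]
    rw [hEdef, hGdef]
    simp only [Matrix.transpose_sub, Matrix.transpose_mul, Matrix.transpose_add,
      Matrix.transpose_transpose, hPt, hRt, hSt]
    simp only [sub_eq_add_neg, neg_add, Matrix.add_mul, Matrix.mul_add, Matrix.neg_mul,
      Matrix.mul_neg, neg_neg, Matrix.mul_assoc]
    abel
  have hX : S + S - S * G * S = (4 * η) • ((1 : Matrix (Fin k) (Fin k) ℝ) - η • G) := by
    rw [hSdef]
    simp only [smul_mul_assoc, Matrix.mul_smul, one_mul, mul_one, smul_smul, smul_sub]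
    module
  have hsum2 : Eᵀ * S * E + Eᵀ * S * E - Eᵀ * S * G * S * E
      = Eᵀ * ((4 * η) • ((1 : Matrix (Fin k) (Fin k) ℝ) - η • G)) * E := by
    rw [← hX]
    simp only [sub_eq_add_neg, neg_add, Matrix.add_mul, Matrix.mul_add, Matrix.neg_mul,
      Matrix.mul_neg, neg_neg, Matrix.mul_assoc]
  have hpsd2 : (Eᵀ * ((4 * η) • ((1 : Matrix (Fin k) (Fin k) ℝ) - η • G)) * E).PosSemidef := by
    have h4 : ((4 * η) • ((1 : Matrix (Fin k) (Fin k) ℝ) - η • G)).PosSemidef :=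
      posSemidef_smul' hpsd1 (by linarith)
    have := h4.conjTranspose_mul_mul_same E
    rwa [Matrix.conjTranspose_eq_transpose_of_trivial] at this
  have hpsdK : ((K - S * E)ᵀ * R * (K - S * E)).PosSemidef := by
    have := hR.posSemidef.conjTranspose_mul_mul_same (K - S * E)
    rwa [Matrix.conjTranspose_eq_transpose_of_trivial] at this
  have hsumpos : (P - (A - B * (K - S * E))ᵀ * P * (A - B * (K - S * E))).PosDef := by
    rw [key, hsum2]
    exact (hQ.add_posSemidef hpsdK).add_posSemidef hpsd2
  exact lyapunov hP hsumpos
end
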